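/- arXiv:2506.16218 — 2 statements merged into one kernel-verified Lean document; each statement's English description precedes it below -/
import Mathlib

section
/- The exponentially tilted weights attain the Gibbs variational supremum: let ι be a nonempty finite type, let p : ι → ℝ be strictly positive probability weights on ι, let f : ι → ℝ, and let c > 0. Set Z = ∑_j p j * Real.exp (f j / c) and q* i = p i * Real.exp (f i / c) / Z. Then q* is a strictly positive probability weight on ι, and ∑_i q* i * f i − c * ∑_i q* i * Real.log (q* i / p i) = c * Real.log Z. -/
/-- The exponentially tilted weights `q* i = p i * exp (f i / c) / Z` form a
strictly positive probability weight and attain the Gibbs variational value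
`c * Real.log Z`. -/
theorem gibbs_tilted_weights_attain {ι : Type*} [Fintype ι] [Nonempty ι]
    (p : ι → ℝ) (hp : ∀ i, 0 < p i) (hps : ∑ i, p i = 1)
    (f : ι → ℝ) (c : ℝ) (hc : 0 < c) :
    let Z : ℝ := ∑ j, p j * Real.exp (f j / c)
    let qs : ι → ℝ := fun i => p i * Real.exp (f i / c) / Z
    (∀ i, 0 < qs i) ∧ (∑ i, qs i = 1) ∧
      (∑ i, qs i * f i - c * ∑ i, qs i * Real.log (qs i / p i) = c * Real.log Z) := by
  intro Z qs
  have hZ : 0 < Z :=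
    Finset.sum_pos (fun i _ => mul_pos (hp i) (Real.exp_pos _)) Finset.univ_nonempty
  have hq : ∀ i, 0 < qs i := fun i => div_pos (mul_pos (hp i) (Real.exp_pos _)) hZ
  have hsum : ∑ i, qs i = 1 := by
    simp only [qs, div_eq_mul_inv, ← Finset.sum_mul]
    exact mul_inv_cancel₀ hZ.ne'
  refine ⟨hq, hsum, ?_⟩
  have hlog : ∀ i, Real.log (qs i / p i) = f i / c - Real.log Z := by
    intro i
    have : qs i / p i = Real.exp (f i / c) / Z := by
      field_simp [qs, (hp i).ne']
      simp only [qs, div_eq_mul_inv]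
      rw [inv_mul_cancel_right₀ hZ.ne']
    rw [this, Real.log_div (Real.exp_pos _).ne' hZ.ne', Real.log_exp]
  calc ∑ i, qs i * f i - c * ∑ i, qs i * Real.log (qs i / p i)
      = ∑ i, qs i * f i - c * ∑ i, qs i * (f i / c - Real.log Z) := by
        simp_rw [hlog]
    _ = c * Real.log Z := by
        have : ∀ i, qs i * (f i / c - Real.log Z)
            = qs i * f i / c - qs i * Real.log Z := by intro i; ring
        simp_rw [this, Finset.sum_sub_distrib, ← Finset.sum_mul, ← Finset.sum_div, hsum,
          mul_sub, mul_div_cancel₀ _ hc.ne']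
        ring
end

section
/- Uniqueness of the optimal reweighting in the Gibbs variational formula: let ι be a nonempty finite type, let p : ι → ℝ be strictly positive probability weights on ι, let f : ι → ℝ, and let c > 0. Set Z = ∑_j p j * Real.exp (f j / c) and q* i = p i * Real.exp (f i / c) / Z. Then for every probability weights q on ι with q ≠ q*, one has ∑_i q i * f i − c * ∑_i q i * Real.log (q i / p i) < c * Real.log Z. -/
/-- Pointwise Gibbs bound: `a - b ≤ a * log (a / b)` for `0 ≤ a`, `0 < b`. -/
lemma gibbs_term_le (a b : ℝ) (ha : 0 ≤ a) (hb : 0 < b) :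
    a - b ≤ a * Real.log (a / b) := by
  rcases eq_or_lt_of_le ha with h | h
  · simp [← h, hb.le]
  · have h1 : Real.log (b / a) ≤ b / a - 1 :=
      Real.log_le_sub_one_of_pos (div_pos hb h)
    have h2 : Real.log (b / a) = - Real.log (a / b) := by
      rw [← Real.log_inv, inv_div]
    have h3 : a * (b / a - 1) = b - a := by field_simp
    have h4 : a * Real.log (b / a) = -(a * Real.log (a / b)) := by rw [h2]; ring
    linarith [mul_le_mul_of_nonneg_left h1 h.le]

/-- Strict pointwise Gibbs bound when `a ≠ b`. -/
lemma gibbs_term_lt (a b : ℝ) (ha : 0 ≤ a) (hb : 0 < b) (hab : a ≠ b) :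
    a - b < a * Real.log (a / b) := by
  rcases eq_or_lt_of_le ha with h | h
  · simp [← h]; linarith
  · have hba : b / a ≠ 1 := by
      intro hE; exact hab ((div_eq_one_iff_eq (ne_of_gt h)).mp hE).symm
    have h1 : Real.log (b / a) < b / a - 1 :=
      Real.log_lt_sub_one_of_pos (div_pos hb h) hba
    have h2 : Real.log (b / a) = - Real.log (a / b) := by
      rw [← Real.log_inv, inv_div]
    have h3 : a * (b / a - 1) = b - a := by field_simp
    have h4 : a * Real.log (b / a) = -(a * Real.log (a / b)) := by rw [h2]; ring
    linarith [mul_lt_mul_of_pos_left h1 h]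

/-- Uniqueness of the optimal reweighting in the Gibbs variational formula:
any probability weights `q` different from the exponentially tilted weights
`q*` achieve a strictly smaller value than `c * Real.log Z`. -/
theorem gibbs_tilted_weights_unique {ι : Type*} [Fintype ι] [Nonempty ι]
    (p : ι → ℝ) (hp : ∀ i, 0 < p i) (hps : ∑ i, p i = 1)
    (f : ι → ℝ) (c : ℝ) (hc : 0 < c) :
    ∀ q : ι → ℝ, (∀ i, 0 ≤ q i) → (∑ i, q i = 1) →
      q ≠ (fun i => p i * Real.exp (f i / c) / (∑ j, p j * Real.exp (f j / c))) →
      ∑ i, q i * f i - c * ∑ i, q i * Real.log (q i / p i)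
        < c * Real.log (∑ j, p j * Real.exp (f j / c)) := by
  intro q hq hqs hne
  set Z : ℝ := ∑ j, p j * Real.exp (f j / c) with hZ
  have hZpos : 0 < Z :=
    Finset.sum_pos (fun i _ => mul_pos (hp i) (Real.exp_pos _)) Finset.univ_nonempty
  set r : ι → ℝ := fun i => p i * Real.exp (f i / c) / Z with hr
  have hrpos : ∀ i, 0 < r i := fun i =>
    div_pos (mul_pos (hp i) (Real.exp_pos _)) hZpos
  have hrs : ∑ i, r i = 1 := by
    simp only [hr, div_eq_mul_inv, ← Finset.sum_mul]
    field_simp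
    exact hZ.symm
  -- key per-term identity
  have key : ∀ i, q i * f i - c * (q i * Real.log (q i / p i))
      = c * (q i * Real.log Z) - c * (q i * Real.log (q i / r i)) := by
    intro i
    rcases eq_or_lt_of_le (hq i) with h | h
    · simp [← h]
    · have hlogr : Real.log (r i) = Real.log (p i) + f i / c - Real.log Z := by
        rw [hr]
        rw [Real.log_div (mul_pos (hp i) (Real.exp_pos _)).ne' (ne_of_gt hZpos),
          Real.log_mul (ne_of_gt (hp i)) (ne_of_gt (Real.exp_pos _)), Real.log_exp]
      have h1 : Real.log (q i / p i) = Real.log (q i) - Real.log (p i) :=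
        Real.log_div (ne_of_gt h) (ne_of_gt (hp i))
      have h2 : Real.log (q i / r i) = Real.log (q i) - Real.log (r i) :=
        Real.log_div (ne_of_gt h) (ne_of_gt (hrpos i))
      rw [h1, h2, hlogr]
      field_simp
      ring
  -- KL(q‖r) > 0
  have hKL : 0 < ∑ i, q i * Real.log (q i / r i) := by
    obtain ⟨i₀, hi₀⟩ : ∃ i, q i ≠ r i := by
      by_contra h
      push_neg at h
      exact hne (funext h)
    have hle : ∀ i ∈ Finset.univ, q i - r i ≤ q i * Real.log (q i / r i) :=
      fun i _ => gibbs_term_le _ _ (hq i) (hrpos i)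
    have hsum : (0:ℝ) < ∑ i, (q i * Real.log (q i / r i) - (q i - r i)) + (∑ i, (q i - r i)) := by
      have : ∑ i, (q i - r i) = 0 := by
        rw [Finset.sum_sub_distrib, hqs, hrs]; ring
      rw [this, add_zero]
      refine Finset.sum_pos' (fun i _ => by linarith [hle i (Finset.mem_univ i)]) ⟨i₀, Finset.mem_univ i₀, ?_⟩
      have := gibbs_term_lt (q i₀) (r i₀) (hq i₀) (hrpos i₀) hi₀
      linarith
    calc (0:ℝ) < _ := hsum
    _ = ∑ i, q i * Real.log (q i / r i) := by
      rw [← Finset.sum_add_distrib]; congr 1; ext i; ring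
  have expand : ∑ i, q i * f i - c * ∑ i, q i * Real.log (q i / p i)
      = c * Real.log Z - c * ∑ i, q i * Real.log (q i / r i) := by
    calc ∑ i, q i * f i - c * ∑ i, q i * Real.log (q i / p i)
        = ∑ i, (q i * f i - c * (q i * Real.log (q i / p i))) := by
          rw [Finset.mul_sum, ← Finset.sum_sub_distrib]
      _ = ∑ i, (c * (q i * Real.log Z) - c * (q i * Real.log (q i / r i))) :=
          Finset.sum_congr rfl (fun i _ => key i)
      _ = c * Real.log Z - c * ∑ i, q i * Real.log (q i / r i) := by
          rw [Finset.sum_sub_distrib, Finset.mul_sum]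
          congr 1
          calc ∑ i, c * (q i * Real.log Z) = c * Real.log Z * ∑ i, q i := by
                rw [Finset.mul_sum]; exact Finset.sum_congr rfl fun i _ => by ring
            _ = c * Real.log Z := by rw [hqs, mul_one]
  rw [expand]
  nlinarith
end
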